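/- If G is a connected median graph that is (s,s−1)-dismantlable for an integer s ≥ 1, then G is 2s-hyperbolic. -/

import Mathlib

open SimpleGraph

variable {V : Type*}

/-- The ball of (real) radius `r` around `v` in `G` (w.r.t. the graph distance). -/
def gBall (G : SimpleGraph V) (v : V) (r : ℝ) : Set V :=
  {x : V | (G.dist v x : ℝ) ≤ r}

/-- The interval `I(u,v)`: vertices lying on shortest `(u,v)`-paths. -/
def gInterval (G : SimpleGraph V) (u v : V) : Set V :=
  {x : V | G.dist u x + G.dist x v = G.dist u v}

/-- Gromov `δ`-hyperbolicity via the four-point condition. -/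
def IsHyperbolic {W : Type*} (G : SimpleGraph W) (δ : ℝ) : Prop :=
  ∀ u v x y : W,
    (G.dist u v : ℝ) + (G.dist x y : ℝ) ≤
      max ((G.dist u x : ℝ) + (G.dist v y : ℝ)) ((G.dist u y : ℝ) + (G.dist v x : ℝ)) + 2 * δ

/-- `(s,s')*`-dismantlability: there is a well-order `lt` on the vertices such that every
vertex `v` which is not the least element is eliminated by some earlier vertex `u`,
i.e. `B_s(v) ∩ X_v ⊆ B_{s'}(u)` where `X_v = {w : w ⪯ v}`. -/
def StarDismantlable (G : SimpleGraph V) (s s' : ℝ) : Prop :=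
  ∃ lt : V → V → Prop, IsWellOrder V lt ∧
    ∀ v : V, (∃ w : V, lt w v) →
      ∃ u : V, lt u v ∧ gBall G v s ∩ {w : V | lt w v ∨ w = v} ⊆ gBall G u s'

/-- The ball of radius `r` around `v` in the subgraph of `G` induced on `V \ {u}`. -/
def gBallRemove (G : SimpleGraph V) (u v : V) (r : ℝ) : Set V :=
  {x : V | ∃ (hv : v ∈ {w : V | w ≠ u}) (hx : x ∈ {w : V | w ≠ u}),
    (G.induce {w : V | w ≠ u}).Reachable ⟨v, hv⟩ ⟨x, hx⟩ ∧
    ((G.induce {w : V | w ≠ u}).dist ⟨v, hv⟩ ⟨x, hx⟩ : ℝ) ≤ r}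

/-- `(s,s')`-dismantlability: there is a well-order `lt` on the vertices such that every
vertex `v` which is not the least element is eliminated by an earlier vertex `u`, i.e.
`B_s(v, G−u) ∩ X_v ⊆ B_{s'}(u)`. -/
def Dismantlable (G : SimpleGraph V) (s s' : ℝ) : Prop :=
  ∃ lt : V → V → Prop, IsWellOrder V lt ∧
    ∀ v : V, (∃ w : V, lt w v) →
      ∃ u : V, lt u v ∧ gBallRemove G u v s ∩ {w : V | lt w v ∨ w = v} ⊆ gBall G u s'

/-- Weak modularity: the triangle and quadrangle conditions. -/
def WeaklyModular (G : SimpleGraph V) : Prop :=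
  (∀ u v w : V, G.dist v w = 1 → 1 < G.dist u v → G.dist u v = G.dist u w →
    ∃ x : V, G.Adj v x ∧ G.Adj w x ∧ G.dist u x + 1 = G.dist u v) ∧
  (∀ u v w z : V, G.dist v z = 1 → G.dist w z = 1 → G.dist v w = 2 →
    2 ≤ G.dist u v → G.dist u v = G.dist u w → G.dist u z = G.dist u v + 1 →
    ∃ x : V, G.Adj v x ∧ G.Adj w x ∧ G.dist u x + 1 = G.dist u v)

/-- `u`, `v`, `w` form a metric triangle: the pairwise intervals intersect only in the
common end-vertices. -/
def MetricTriangle (G : SimpleGraph V) (u v w : V) : Prop :=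
  gInterval G u v ∩ gInterval G v w = {v} ∧
  gInterval G v w ∩ gInterval G w u = {w} ∧
  gInterval G w u ∩ gInterval G u v = {u}

/-- A median graph: any three vertices have a unique median. -/
def MedianGraph (G : SimpleGraph V) : Prop :=
  ∀ u v w : V, ∃! m : V,
    m ∈ gInterval G u v ∩ gInterval G u w ∩ gInterval G v w
namespace Stmt14Aux

variable {G : SimpleGraph V}

lemma adj_dist_one (h : G.Adj a b) : G.dist a b = 1 :=
  SimpleGraph.dist_eq_one_iff_adj.mpr h

lemma getVert_dist_left (hG : G.Connected) {a b : V} (p : G.Walk a b) (k : ℕ) :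
    G.dist a (p.getVert k) ≤ k := by
  induction p generalizing k with
  | nil => simp [SimpleGraph.Walk.getVert, SimpleGraph.dist_self]
  | @cons u c b h q ih =>
    cases k with
    | zero => simp
    | succ k =>
      rw [SimpleGraph.Walk.getVert_cons_succ]
      calc G.dist u (q.getVert k) ≤ G.dist u c + G.dist c (q.getVert k) := hG.dist_triangle
        _ ≤ 1 + k := by
            have := adj_dist_one h
            have := ih k
            omega
        _ = k + 1 := by omega

lemma getVert_dist_right (hG : G.Connected) {a b : V} (p : G.Walk a b) {k : ℕ}
    (hk : k ≤ p.length) : G.dist (p.getVert k) b + k ≤ p.length := by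
  induction p generalizing k with
  | nil => simp_all [SimpleGraph.Walk.getVert]
  | @cons u c b h q ih =>
    cases k with
    | zero =>
      have := SimpleGraph.dist_le (SimpleGraph.Walk.cons h q)
      simpa using this
    | succ k =>
      rw [SimpleGraph.Walk.getVert_cons_succ]
      have : k ≤ q.length := by simp at hk; omega
      have := ih this
      simp only [SimpleGraph.Walk.length_cons]
      omega

lemma exists_between (hG : G.Connected) (a b : V) {t : ℕ} (ht : t ≤ G.dist a b) :
    ∃ c : V, G.dist a c = t ∧ G.dist a c + G.dist c b = G.dist a b := by
  obtain ⟨p, hp⟩ := hG.exists_walk_length_eq_dist a b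
  refine ⟨p.getVert t, ?_, ?_⟩ <;>
  · have h1 := getVert_dist_left hG p t
    have h2 := getVert_dist_right hG p (k := t) (by omega)
    have h3 : G.dist a b ≤ G.dist a (p.getVert t) + G.dist (p.getVert t) b := hG.dist_triangle
    omega


noncomputable def medFn (hmed : MedianGraph G) (u v w : V) : V :=
  (hmed u v w).exists.choose

lemma medFn_spec (hmed : MedianGraph G) (u v w : V) :
    G.dist u (medFn hmed u v w) + G.dist (medFn hmed u v w) v = G.dist u v ∧
    G.dist u (medFn hmed u v w) + G.dist (medFn hmed u v w) w = G.dist u w ∧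
    G.dist v (medFn hmed u v w) + G.dist (medFn hmed u v w) w = G.dist v w := by
  have h := (hmed u v w).exists.choose_spec
  exact ⟨h.1.1, h.1.2, h.2⟩

/-- Quadrangle-type condition in median graphs. -/
lemma qc (hmed : MedianGraph G) {u v w : V} (h2 : G.dist v w = 2)
    (he : G.dist u v = G.dist u w) :
    ∃ m, G.dist v m = 1 ∧ G.dist w m = 1 ∧ G.dist u m + 1 = G.dist u v := by
  obtain ⟨h1, h2', h3⟩ := medFn_spec hmed u v w
  set m := medFn hmed u v w
  have hc1 : G.dist m v = G.dist v m := SimpleGraph.dist_comm ..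
  have hc2 : G.dist m w = G.dist w m := SimpleGraph.dist_comm ..
  exact ⟨m, by omega, by omega, by omega⟩

open Classical in
noncomputable def qcStep (G : SimpleGraph V) (u p q : V) : V :=
  if h : ∃ m, G.dist p m = 1 ∧ G.dist q m = 1 ∧ G.dist u m + 1 = G.dist u p then h.choose else p

lemma qcStep_spec {G : SimpleGraph V} {u p q : V}
    (h : ∃ m, G.dist p m = 1 ∧ G.dist q m = 1 ∧ G.dist u m + 1 = G.dist u p) :
    G.dist p (qcStep G u p q) = 1 ∧ G.dist q (qcStep G u p q) = 1 ∧
    G.dist u (qcStep G u p q) + 1 = G.dist u p := by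
  unfold qcStep
  rw [dif_pos h]
  exact h.choose_spec

noncomputable def gridFun (G : SimpleGraph V) (b : V) (x y : ℕ → V) : ℕ → ℕ → V
  | 0, j => y j
  | (i+1), 0 => x (i+1)
  | (i+1), (j+1) => qcStep G b (gridFun G b x y (i+1) j) (gridFun G b x y i (j+1))
  termination_by i j => (i, j)

lemma gridFun_zero (G : SimpleGraph V) (b : V) (x y : ℕ → V) (j : ℕ) :
    gridFun G b x y 0 j = y j := by
  cases j <;> simp [gridFun]

lemma gridFun_succ_zero (G : SimpleGraph V) (b : V) (x y : ℕ → V) (i : ℕ) :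
    gridFun G b x y (i+1) 0 = x (i+1) := by simp [gridFun]

lemma gridFun_succ_succ (G : SimpleGraph V) (b : V) (x y : ℕ → V) (i j : ℕ) :
    gridFun G b x y (i+1) (j+1)
      = qcStep G b (gridFun G b x y (i+1) j) (gridFun G b x y i (j+1)) := by
  simp [gridFun]

set_option maxHeartbeats 2000000 in
lemma grid_exists (hG : G.Connected) (hmed : MedianGraph G)
    {m c e b : V} {K C0 N : ℕ} (hKN : N ≤ K)
    (hmc : G.dist m c = K) (hme : G.dist m e = K) (hce : G.dist c e = 2*K)
    (hbm : G.dist b m = C0) (hbc : G.dist b c + K = C0) (hbe : G.dist b e + K = C0) :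
    ∃ g : ℕ → ℕ → V, ∀ i j k l, i ≤ N → j ≤ N → k ≤ N → l ≤ N →
      G.dist (g i j) (g k l) = Nat.dist i k + Nat.dist j l := by
  obtain ⟨p, hp⟩ := hG.exists_walk_length_eq_dist m c
  obtain ⟨q, hq⟩ := hG.exists_walk_length_eq_dist m e
  set x : ℕ → V := fun i => p.getVert i with hxdef
  set y : ℕ → V := fun j => q.getVert j with hydef
  have hx : ∀ i ≤ K, G.dist m (x i) = i ∧ G.dist (x i) c + i = K := by
    intro i hi
    have h1 : G.dist m (x i) ≤ i := getVert_dist_left hG p i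
    have h2 : G.dist (x i) c + i ≤ p.length := getVert_dist_right hG p (k := i) (by omega)
    have h3 : G.dist m c ≤ G.dist m (x i) + G.dist (x i) c := hG.dist_triangle
    constructor <;> omega
  have hy : ∀ j ≤ K, G.dist m (y j) = j ∧ G.dist (y j) e + j = K := by
    intro j hj
    have h1 : G.dist m (y j) ≤ j := getVert_dist_left hG q j
    have h2 : G.dist (y j) e + j ≤ q.length := getVert_dist_right hG q (k := j) (by omega)
    have h3 : G.dist m e ≤ G.dist m (y j) + G.dist (y j) e := hG.dist_triangle
    constructor <;> omega
  have hxadj : ∀ i < K, G.dist (x i) (x (i+1)) = 1 := by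
    intro i hi
    have h : G.Adj (x i) (x (i+1)) := p.adj_getVert_succ (by omega)
    exact adj_dist_one h
  have hyadj : ∀ j < K, G.dist (y j) (y (j+1)) = 1 := by
    intro j hj
    have h : G.Adj (y j) (y (j+1)) := q.adj_getVert_succ (by omega)
    exact adj_dist_one h
  have hy0 : y 0 = m := q.getVert_zero
  -- potentials for the base rows
  have hcy : ∀ j ≤ K, G.dist c (y j) = K + j := by
    intro j hj
    obtain ⟨hy1, hy2⟩ := hy j hj
    have t1 : G.dist c (y j) ≤ G.dist c m + G.dist m (y j) := hG.dist_triangle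
    have t2 : G.dist c e ≤ G.dist c (y j) + G.dist (y j) e := hG.dist_triangle
    have c1 : G.dist c m = G.dist m c := SimpleGraph.dist_comm ..
    omega
  have hex : ∀ i ≤ K, G.dist e (x i) = K + i := by
    intro i hi
    obtain ⟨hx1, hx2⟩ := hx i hi
    have t1 : G.dist e (x i) ≤ G.dist e m + G.dist m (x i) := hG.dist_triangle
    have t2 : G.dist c e ≤ G.dist c (x i) + G.dist (x i) e := hG.dist_triangle
    have c1 : G.dist e m = G.dist m e := SimpleGraph.dist_comm ..
    have c2 : G.dist c (x i) = G.dist (x i) c := SimpleGraph.dist_comm ..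
    have c3 : G.dist (x i) e = G.dist e (x i) := SimpleGraph.dist_comm ..
    omega
  have hbx : ∀ i ≤ K, G.dist b (x i) + i = C0 := by
    intro i hi
    obtain ⟨hx1, hx2⟩ := hx i hi
    have t1 : G.dist b (x i) ≤ G.dist b c + G.dist c (x i) := hG.dist_triangle
    have t2 : G.dist b m ≤ G.dist b (x i) + G.dist (x i) m := hG.dist_triangle
    have c1 : G.dist c (x i) = G.dist (x i) c := SimpleGraph.dist_comm ..
    have c2 : G.dist (x i) m = G.dist m (x i) := SimpleGraph.dist_comm ..
    omega
  have hby : ∀ j ≤ K, G.dist b (y j) + j = C0 := by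
    intro j hj
    obtain ⟨hy1, hy2⟩ := hy j hj
    have t1 : G.dist b (y j) ≤ G.dist b e + G.dist e (y j) := hG.dist_triangle
    have t2 : G.dist b m ≤ G.dist b (y j) + G.dist (y j) m := hG.dist_triangle
    have c1 : G.dist e (y j) = G.dist (y j) e := SimpleGraph.dist_comm ..
    have c2 : G.dist (y j) m = G.dist m (y j) := SimpleGraph.dist_comm ..
    omega
  have hey : ∀ j ≤ K, G.dist e (y j) + j = K := by
    intro j hj
    have := (hy j hj).2
    have c1 : G.dist e (y j) = G.dist (y j) e := SimpleGraph.dist_comm ..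
    omega
  have hcx : ∀ i ≤ K, G.dist c (x i) + i = K := by
    intro i hi
    have := (hx i hi).2
    have c1 : G.dist c (x i) = G.dist (x i) c := SimpleGraph.dist_comm ..
    omega
  -- the key invariants, by strong induction on i + j
  have key : ∀ n : ℕ, ∀ i j, i + j = n → i ≤ N → j ≤ N →
      (G.dist b (gridFun G b x y i j) + (i+j) = C0) ∧
      (G.dist c (gridFun G b x y i j) + i = K + j) ∧
      (G.dist e (gridFun G b x y i j) + j = K + i) ∧
      (∀ i', i = i' + 1 → G.dist (gridFun G b x y i' j) (gridFun G b x y i j) = 1) ∧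
      (∀ j', j = j' + 1 → G.dist (gridFun G b x y i j') (gridFun G b x y i j) = 1) := by
    intro n
    induction n using Nat.strong_induction_on with
    | _ n ih =>
      intro i j hn hi hj
      match i, j with
      | 0, j =>
        rw [gridFun_zero]
        refine ⟨by have := hby j (by omega); omega,
                by have := hcy j (by omega); omega,
                by have := hey j (by omega); omega,
                fun i' h => absurd h (by omega), fun j' h => ?_⟩
        subst h
        rw [gridFun_zero]
        exact hyadj j' (by omega)
      | (i+1), 0 =>
        rw [gridFun_succ_zero]
        refine ⟨by have := hbx (i+1) (by omega); omega,
                by have := hcx (i+1) (by omega); omega,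
                by have := hex (i+1) (by omega); omega,
                fun i' h => ?_, fun j' h => absurd h (by omega)⟩
        have hii : i' = i := by omega
        subst hii
        match i' with
        | 0 =>
          rw [gridFun_zero, hy0]
          have := hxadj 0 (by omega)
          have hx0 : x 0 = m := p.getVert_zero
          rw [hx0] at this
          exact this
        | (k+1) =>
          rw [gridFun_succ_zero]
          exact hxadj (k+1) (by omega)
      | (i+1), (j+1) =>
        have hA := ih (i+1+j) (by omega) (i+1) j rfl (by omega) (by omega)
        have hB := ih (i+(j+1)) (by omega) i (j+1) rfl (by omega) (by omega)
        have eH : G.dist (gridFun G b x y i j) (gridFun G b x y (i+1) j) = 1 :=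
          hA.2.2.2.1 i rfl
        have eV : G.dist (gridFun G b x y i j) (gridFun G b x y i (j+1)) = 1 :=
          hB.2.2.2.2 j rfl
        have hd2 : G.dist (gridFun G b x y (i+1) j) (gridFun G b x y i (j+1)) = 2 := by
          have t1 : G.dist (gridFun G b x y (i+1) j) (gridFun G b x y i (j+1)) ≤
              G.dist (gridFun G b x y (i+1) j) (gridFun G b x y i j) +
              G.dist (gridFun G b x y i j) (gridFun G b x y i (j+1)) := hG.dist_triangle
          have c1 : G.dist (gridFun G b x y (i+1) j) (gridFun G b x y i j) =
              G.dist (gridFun G b x y i j) (gridFun G b x y (i+1) j) := SimpleGraph.dist_comm ..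
          have t2 : G.dist c (gridFun G b x y i (j+1)) ≤
              G.dist c (gridFun G b x y (i+1) j) +
              G.dist (gridFun G b x y (i+1) j) (gridFun G b x y i (j+1)) := hG.dist_triangle
          have pA := hA.2.1
          have pB := hB.2.1
          omega
        have apexeq : G.dist b (gridFun G b x y (i+1) j) = G.dist b (gridFun G b x y i (j+1)) := by
          have pA := hA.1
          have pB := hB.1
          omega
        have hstep := qcStep_spec (qc hmed hd2 apexeq)
        rw [gridFun_succ_succ]
        obtain ⟨S1, S2, S3⟩ := hstep
        refine ⟨by have := hA.1; omega, ?_, ?_, fun i' h => ?_, fun j' h => ?_⟩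
        · have t1 : G.dist c (qcStep G b (gridFun G b x y (i+1) j) (gridFun G b x y i (j+1))) ≤
              G.dist c (gridFun G b x y (i+1) j) +
              G.dist (gridFun G b x y (i+1) j)
                (qcStep G b (gridFun G b x y (i+1) j) (gridFun G b x y i (j+1))) := hG.dist_triangle
          have t2 : G.dist c (gridFun G b x y i (j+1)) ≤
              G.dist c (qcStep G b (gridFun G b x y (i+1) j) (gridFun G b x y i (j+1))) +
              G.dist (qcStep G b (gridFun G b x y (i+1) j) (gridFun G b x y i (j+1)))
                (gridFun G b x y i (j+1)) := hG.dist_triangle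
          have c1 : G.dist (qcStep G b (gridFun G b x y (i+1) j) (gridFun G b x y i (j+1)))
                (gridFun G b x y i (j+1)) =
              G.dist (gridFun G b x y i (j+1))
                (qcStep G b (gridFun G b x y (i+1) j) (gridFun G b x y i (j+1))) :=
            SimpleGraph.dist_comm ..
          have pA := hA.2.1
          have pB := hB.2.1
          omega
        · have t1 : G.dist e (qcStep G b (gridFun G b x y (i+1) j) (gridFun G b x y i (j+1))) ≤
              G.dist e (gridFun G b x y i (j+1)) +
              G.dist (gridFun G b x y i (j+1))
                (qcStep G b (gridFun G b x y (i+1) j) (gridFun G b x y i (j+1))) := hG.dist_triangle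
          have t2 : G.dist e (gridFun G b x y (i+1) j) ≤
              G.dist e (qcStep G b (gridFun G b x y (i+1) j) (gridFun G b x y i (j+1))) +
              G.dist (qcStep G b (gridFun G b x y (i+1) j) (gridFun G b x y i (j+1)))
                (gridFun G b x y (i+1) j) := hG.dist_triangle
          have c1 : G.dist (qcStep G b (gridFun G b x y (i+1) j) (gridFun G b x y i (j+1)))
                (gridFun G b x y (i+1) j) =
              G.dist (gridFun G b x y (i+1) j)
                (qcStep G b (gridFun G b x y (i+1) j) (gridFun G b x y i (j+1))) :=
            SimpleGraph.dist_comm ..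
          have pA := hA.2.2.1
          have pB := hB.2.2.1
          omega
        · have hii : i' = i := by omega
          subst hii
          exact S2
        · have hjj : j' = j := by omega
          subst hjj
          exact S1
  refine ⟨gridFun G b x y, ?_⟩
  intro i j k l hi hj hk hl
  have potb : ∀ i j, i ≤ N → j ≤ N → G.dist b (gridFun G b x y i j) + (i+j) = C0 :=
    fun i j hi hj => (key (i+j) i j rfl hi hj).1
  have potc : ∀ i j, i ≤ N → j ≤ N → G.dist c (gridFun G b x y i j) + i = K + j :=
    fun i j hi hj => (key (i+j) i j rfl hi hj).2.1
  have eH : ∀ i j, i + 1 ≤ N → j ≤ N →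
      G.dist (gridFun G b x y i j) (gridFun G b x y (i+1) j) = 1 :=
    fun i j hi hj => (key (i+1+j) (i+1) j rfl hi hj).2.2.2.1 i rfl
  have eV : ∀ i j, i ≤ N → j + 1 ≤ N →
      G.dist (gridFun G b x y i j) (gridFun G b x y i (j+1)) = 1 :=
    fun i j hi hj => (key (i+(j+1)) i (j+1) rfl hi hj).2.2.2.2 j rfl
  have hupH : ∀ j ≤ N, ∀ i t, i + t ≤ N →
      G.dist (gridFun G b x y i j) (gridFun G b x y (i+t) j) ≤ t := by
    intro j hj i t
    induction t with
    | zero => intro _; simp [SimpleGraph.dist_self]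
    | succ t iht =>
      intro h
      have t1 : G.dist (gridFun G b x y i j) (gridFun G b x y (i+t+1) j) ≤
          G.dist (gridFun G b x y i j) (gridFun G b x y (i+t) j) +
          G.dist (gridFun G b x y (i+t) j) (gridFun G b x y (i+t+1) j) := hG.dist_triangle
      have h2 := iht (by omega)
      have h3 := eH (i+t) j (by omega) hj
      have : i + (t+1) = i + t + 1 := by omega
      rw [this]
      omega
  have hupV : ∀ i ≤ N, ∀ j t, j + t ≤ N →
      G.dist (gridFun G b x y i j) (gridFun G b x y i (j+t)) ≤ t := by
    intro i hi j t
    induction t with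
    | zero => intro _; simp [SimpleGraph.dist_self]
    | succ t iht =>
      intro h
      have t1 : G.dist (gridFun G b x y i j) (gridFun G b x y i (j+t+1)) ≤
          G.dist (gridFun G b x y i j) (gridFun G b x y i (j+t)) +
          G.dist (gridFun G b x y i (j+t)) (gridFun G b x y i (j+t+1)) := hG.dist_triangle
      have h2 := iht (by omega)
      have h3 := eV i (j+t) hi (by omega)
      have : j + (t+1) = j + t + 1 := by omega
      rw [this]
      omega
  have hH : ∀ i k j, i ≤ N → k ≤ N → j ≤ N →
      G.dist (gridFun G b x y i j) (gridFun G b x y k j) ≤ (i - k) + (k - i) := by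
    intro i k j hi hk hj
    rcases le_total i k with h | h
    · have h2 := hupH j hj i (k - i) (by omega)
      have h3 : i + (k - i) = k := by omega
      rw [h3] at h2
      omega
    · have h2 := hupH j hj k (i - k) (by omega)
      have h3 : k + (i - k) = i := by omega
      rw [h3] at h2
      have c1 : G.dist (gridFun G b x y k j) (gridFun G b x y i j) =
          G.dist (gridFun G b x y i j) (gridFun G b x y k j) := SimpleGraph.dist_comm ..
      omega
  have hV : ∀ j l i, j ≤ N → l ≤ N → i ≤ N →
      G.dist (gridFun G b x y i j) (gridFun G b x y i l) ≤ (j - l) + (l - j) := by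
    intro j l i hj hl hi
    rcases le_total j l with h | h
    · have h2 := hupV i hi j (l - j) (by omega)
      have h3 : j + (l - j) = l := by omega
      rw [h3] at h2
      omega
    · have h2 := hupV i hi l (j - l) (by omega)
      have h3 : l + (j - l) = j := by omega
      rw [h3] at h2
      have c1 : G.dist (gridFun G b x y i l) (gridFun G b x y i j) =
          G.dist (gridFun G b x y i j) (gridFun G b x y i l) := SimpleGraph.dist_comm ..
      omega
  -- upper bound
  have hup : G.dist (gridFun G b x y i j) (gridFun G b x y k l) ≤
      ((i - k) + (k - i)) + ((j - l) + (l - j)) := by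
    have t1 : G.dist (gridFun G b x y i j) (gridFun G b x y k l) ≤
        G.dist (gridFun G b x y i j) (gridFun G b x y k j) +
        G.dist (gridFun G b x y k j) (gridFun G b x y k l) := hG.dist_triangle
    have h1 := hH i k j hi hk hj
    have h2 := hV j l k hj hl hk
    omega
  -- lower bound via the two potentials
  have b1 := potb i j hi hj
  have b2 := potb k l hk hl
  have c1 := potc i j hi hj
  have c2 := potc k l hk hl
  have t1 : G.dist b (gridFun G b x y k l) ≤ G.dist b (gridFun G b x y i j) +
      G.dist (gridFun G b x y i j) (gridFun G b x y k l) := hG.dist_triangle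
  have t2 : G.dist b (gridFun G b x y i j) ≤ G.dist b (gridFun G b x y k l) +
      G.dist (gridFun G b x y k l) (gridFun G b x y i j) := hG.dist_triangle
  have t3 : G.dist c (gridFun G b x y k l) ≤ G.dist c (gridFun G b x y i j) +
      G.dist (gridFun G b x y i j) (gridFun G b x y k l) := hG.dist_triangle
  have t4 : G.dist c (gridFun G b x y i j) ≤ G.dist c (gridFun G b x y k l) +
      G.dist (gridFun G b x y k l) (gridFun G b x y i j) := hG.dist_triangle
  have cc : G.dist (gridFun G b x y k l) (gridFun G b x y i j) =
      G.dist (gridFun G b x y i j) (gridFun G b x y k l) := SimpleGraph.dist_comm ..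
  simp only [Nat.dist]
  omega



lemma exists_max_fun (lt : V → V → Prop)
    (htri : ∀ a b, lt a b ∨ a = b ∨ lt b a)
    (htr : ∀ a b c, lt a b → lt b c → lt a c)
    (f : ℕ → V) (N : ℕ) :
    ∃ k ≤ N, ∀ i ≤ N, f i = f k ∨ lt (f i) (f k) := by
  induction N with
  | zero =>
    refine ⟨0, le_refl 0, fun i hi => ?_⟩
    have : i = 0 := by omega
    subst this; exact Or.inl rfl
  | succ N ihN =>
    obtain ⟨k, hk, hmax⟩ := ihN
    rcases htri (f (N+1)) (f k) with h | h | h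
    · refine ⟨k, by omega, fun i hi => ?_⟩
      rcases Nat.lt_or_ge i (N+1) with h2 | h2
      · exact hmax i (by omega)
      · have : i = N+1 := by omega
        subst this; exact Or.inr h
    · refine ⟨k, by omega, fun i hi => ?_⟩
      rcases Nat.lt_or_ge i (N+1) with h2 | h2
      · exact hmax i (by omega)
      · have : i = N+1 := by omega
        subst this; exact Or.inl h
    · refine ⟨N+1, le_refl _, fun i hi => ?_⟩
      rcases Nat.lt_or_ge i (N+1) with h2 | h2
      · rcases hmax i (by omega) with h3 | h3
        · rw [h3]; exact Or.inr h
        · exact Or.inr (htr _ _ _ h3 h)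
      · have : i = N+1 := by omega
        subst this; exact Or.inl rfl

lemma exists_max_pair (lt : V → V → Prop)
    (htri : ∀ a b, lt a b ∨ a = b ∨ lt b a)
    (htr : ∀ a b c, lt a b → lt b c → lt a c)
    (f : ℕ → ℕ → V) (N : ℕ) :
    ∃ i₀ j₀, i₀ ≤ N ∧ j₀ ≤ N ∧ ∀ i j, i ≤ N → j ≤ N →
      f i j = f i₀ j₀ ∨ lt (f i j) (f i₀ j₀) := by
  have hrow : ∀ i : ℕ, ∃ k, k ≤ N ∧ ∀ j ≤ N, f i j = f i k ∨ lt (f i j) (f i k) := by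
    intro i
    obtain ⟨k, hk1, hk2⟩ := exists_max_fun lt htri htr (f i) N
    exact ⟨k, hk1, hk2⟩
  choose rj hrj1 hrj2 using hrow
  obtain ⟨i₀, hi₀, hmax⟩ := exists_max_fun lt htri htr (fun i => f i (rj i)) N
  refine ⟨i₀, rj i₀, hi₀, hrj1 i₀, fun i j hi hj => ?_⟩
  have h2 : f i (rj i) = f i₀ (rj i₀) ∨ lt (f i (rj i)) (f i₀ (rj i₀)) := hmax i hi
  rcases hrj2 i j hj with h1 | h1 <;> rcases h2 with h2 | h2
  · exact Or.inl (h1.trans h2)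
  · rw [h1]; exact Or.inr h2
  · rw [h2] at h1; exact Or.inr h1
  · exact Or.inr (htr _ _ _ h1 h2)

lemma walk_in_remove {w z : V} (hzw : z ≠ w) (f : ℕ → V) (n : ℕ) (hf0 : f 0 = z)
    (hadj : ∀ t < n, G.Adj (f t) (f (t+1))) (hne : ∀ t ≤ n, f t ≠ w)
    {r : ℝ} (hr : (n : ℝ) ≤ r) :
    f n ∈ gBallRemove G w z r := by
  have haux : ∀ t, ∀ (ht : t ≤ n),
      ∃ pw : (G.induce {x : V | x ≠ w}).Walk ⟨z, hzw⟩ ⟨f t, hne t ht⟩, pw.length ≤ t := by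
    intro t
    induction t with
    | zero =>
      intro ht
      refine ⟨(SimpleGraph.Walk.nil).copy rfl (Subtype.ext hf0.symm), ?_⟩
      simp
    | succ t ih =>
      intro ht
      obtain ⟨pw, hpw⟩ := ih (by omega)
      have ha : (G.induce {x : V | x ≠ w}).Adj ⟨f t, hne t (by omega)⟩ ⟨f (t+1), hne (t+1) ht⟩ :=
        hadj t (by omega)
      refine ⟨pw.concat ha, ?_⟩
      rw [SimpleGraph.Walk.length_concat]
      omega
  obtain ⟨pw, hpw⟩ := haux n le_rfl
  refine ⟨hzw, hne n le_rfl, ⟨pw⟩, ?_⟩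
  have hd : (G.induce {x : V | x ≠ w}).dist ⟨z, hzw⟩ ⟨f n, hne n le_rfl⟩ ≤ pw.length :=
    SimpleGraph.dist_le pw
  have : ((G.induce {x : V | x ≠ w}).dist ⟨z, hzw⟩ ⟨f n, hne n le_rfl⟩ : ℝ) ≤ (n : ℝ) := by
    exact_mod_cast le_trans hd hpw
  linarith

lemma defect_branch (hG : G.Connected) (hmed : MedianGraph G) (a b x y : V)
    (hle : G.dist a (medFn hmed a b x) ≤ G.dist a (medFn hmed a b y)) :
    ∃ c e : V, (G.dist a c + G.dist c b = G.dist a b) ∧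
      (G.dist a e + G.dist e b = G.dist a b) ∧ G.dist a c = G.dist a e ∧
      G.dist a b + G.dist x y ≤ (G.dist a y + G.dist b x) + G.dist c e := by
  obtain ⟨hx1, hx2, hx3⟩ := medFn_spec hmed a b x
  obtain ⟨hy1, hy2, hy3⟩ := medFn_spec hmed a b y
  set cx := medFn hmed a b x with hcx
  set cy := medFn hmed a b y with hcy
  have hΔ : (G.dist a cy - G.dist a cx) ≤ G.dist cx b := by
    have hcb : G.dist cx b = G.dist b cx := SimpleGraph.dist_comm ..
    omega
  obtain ⟨c2, hc2a, hc2b⟩ := exists_between hG cx b hΔ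
  have t1 : G.dist a c2 ≤ G.dist a cx + G.dist cx c2 := hG.dist_triangle
  have t2 : G.dist a b ≤ G.dist a c2 + G.dist c2 b := hG.dist_triangle
  have key1 : G.dist a c2 + G.dist c2 b = G.dist a b := by omega
  have key2 : G.dist a c2 = G.dist a cy := by omega
  refine ⟨c2, cy, key1, hy1, key2, ?_⟩
  have u1 : G.dist x y ≤ G.dist x cx + G.dist cx y := hG.dist_triangle
  have u2 : G.dist cx y ≤ G.dist cx c2 + G.dist c2 y := hG.dist_triangle
  have u3 : G.dist c2 y ≤ G.dist c2 cy + G.dist cy y := hG.dist_triangle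
  have cxx : G.dist x cx = G.dist cx x := SimpleGraph.dist_comm ..
  have bcx : G.dist b cx = G.dist cx b := SimpleGraph.dist_comm ..
  omega

lemma defect_le (hG : G.Connected) (hmed : MedianGraph G) (a b x y : V) :
    ∃ c e : V, (G.dist a c + G.dist c b = G.dist a b) ∧
      (G.dist a e + G.dist e b = G.dist a b) ∧ G.dist a c = G.dist a e ∧
      G.dist a b + G.dist x y ≤
        max (G.dist a x + G.dist b y) (G.dist a y + G.dist b x) + G.dist c e := by
  rcases le_total (G.dist a (medFn hmed a b x)) (G.dist a (medFn hmed a b y)) with h | h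
  · obtain ⟨c, e, p1, p2, p3, p4⟩ := defect_branch hG hmed a b x y h
    refine ⟨c, e, p1, p2, p3, le_trans p4 ?_⟩
    exact Nat.add_le_add_right (le_max_right _ _) _
  · obtain ⟨c, e, p1, p2, p3, p4⟩ := defect_branch hG hmed a b y x h
    refine ⟨c, e, p1, p2, p3, ?_⟩
    have cxy : G.dist y x = G.dist x y := SimpleGraph.dist_comm ..
    rw [cxy] at p4
    exact le_trans p4 (Nat.add_le_add_right (le_max_left _ _) _)

set_option maxHeartbeats 1000000 in
lemma thin (hG : G.Connected) (hmed : MedianGraph G) {s : ℕ} (hs : 1 ≤ s)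
    (hd : Dismantlable G (s : ℝ) ((s : ℝ) - 1)) {a b c e : V}
    (hc : G.dist a c + G.dist c b = G.dist a b)
    (he : G.dist a e + G.dist e b = G.dist a b)
    (hte : G.dist a c = G.dist a e) :
    G.dist c e ≤ 4 * s := by
  by_contra hcon
  push_neg at hcon
  obtain ⟨hm1, hm2, hm3⟩ := medFn_spec hmed a c e
  set m := medFn hmed a c e with hmdef
  have cmc : G.dist m c = G.dist c m := SimpleGraph.dist_comm ..
  have cme : G.dist m e = G.dist e m := SimpleGraph.dist_comm ..
  set K := G.dist m c with hKdef
  have hmc : G.dist m c = K := rfl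
  have hme : G.dist m e = K := by omega
  have hce : G.dist c e = 2*K := by omega
  have hK : 2*s + 1 ≤ K := by omega
  set C0 := G.dist b m with hC0def
  have hbm : G.dist b m = C0 := rfl
  have hbc : G.dist b c + K = C0 := by
    have t1 : G.dist b m ≤ G.dist b c + G.dist c m := hG.dist_triangle
    have t2 : G.dist a b ≤ G.dist a m + G.dist m b := hG.dist_triangle
    have c1 : G.dist m b = G.dist b m := SimpleGraph.dist_comm ..
    have c2 : G.dist c b = G.dist b c := SimpleGraph.dist_comm ..
    omega
  have hbe : G.dist b e + K = C0 := by
    have t1 : G.dist b m ≤ G.dist b e + G.dist e m := hG.dist_triangle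
    have t2 : G.dist a b ≤ G.dist a m + G.dist m b := hG.dist_triangle
    have c1 : G.dist m b = G.dist b m := SimpleGraph.dist_comm ..
    have c2 : G.dist e b = G.dist b e := SimpleGraph.dist_comm ..
    omega
  obtain ⟨g, hgrid⟩ := grid_exists (N := 2*s) hG hmed (by omega) hmc hme hce hbm hbc hbe
  obtain ⟨lt, hwo, helim⟩ := hd
  have htri : ∀ p q : V, lt p q ∨ p = q ∨ lt q p :=
    fun p q => by haveI := hwo; exact trichotomous_of lt p q
  have htr : ∀ p q r : V, lt p q → lt q r → lt p r :=
    fun p q r h1 h2 => by haveI := hwo; exact IsTrans.trans (r := lt) _ _ _ h1 h2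
  have hirr : ∀ p : V, ¬ lt p p := fun p => (hwo.toIsWellFounded.wf.isIrrefl).irrefl p
  obtain ⟨i₀, j₀, hi₀, hj₀, hmax⟩ := exists_max_pair lt htri htr g (2*s)
  have hzpred : ∃ w, lt w (g i₀ j₀) := by
    have hne01 : g 0 0 ≠ g 1 0 := by
      intro hEq
      have hdist := hgrid 0 0 1 0 (by omega) (by omega) (by omega) (by omega)
      rw [hEq, SimpleGraph.dist_self] at hdist
      simp [Nat.dist] at hdist
    rcases hmax 0 0 (by omega) (by omega) with h1 | h1 <;>
      rcases hmax 1 0 (by omega) (by omega) with h2 | h2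
    · exact absurd (h1.trans h2.symm) hne01
    · exact ⟨_, h2⟩
    · exact ⟨_, h1⟩
    · exact ⟨_, h1⟩
  obtain ⟨w, hltwz, hsub⟩ := helim (g i₀ j₀) hzpred
  have hwz : w ≠ g i₀ j₀ := fun h => hirr (g i₀ j₀) (h ▸ hltwz)
  have hzw : g i₀ j₀ ≠ w := fun h => hwz h.symm
  have hX : ∀ i j, i ≤ 2*s → j ≤ 2*s → g i j ∈ {w' : V | lt w' (g i₀ j₀) ∨ w' = g i₀ j₀} := by
    intro i j hi hj
    rcases hmax i j hi hj with h | h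
    · exact Or.inr h
    · exact Or.inl h
  have hball : ∀ pt : V, pt ∈ gBall G w ((s:ℝ)-1) → G.dist w pt + 1 ≤ s := by
    intro pt hpt
    have h1 : (G.dist w pt : ℝ) ≤ (s:ℝ) - 1 := hpt
    have h2 : ((G.dist w pt + 1 : ℕ) : ℝ) ≤ (s : ℝ) := by push_cast; linarith
    exact_mod_cast h2
  -- rays
  set ph : ℕ → ℕ := fun t => if i₀ ≤ s then i₀ + t else i₀ - t with hphdef
  set pv : ℕ → ℕ := fun t => if j₀ ≤ s then j₀ + t else j₀ - t with hpvdef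
  have hph : ∀ t, t ≤ s → ph t ≤ 2*s ∧ Nat.dist i₀ (ph t) = t ∧ Nat.dist (ph t) i₀ = t := by
    intro t ht
    simp only [hphdef]
    split_ifs with h <;> refine ⟨by omega, ?_, ?_⟩ <;> simp [Nat.dist] <;> omega
  have hpv : ∀ t, t ≤ s → pv t ≤ 2*s ∧ Nat.dist j₀ (pv t) = t ∧ Nat.dist (pv t) j₀ = t := by
    intro t ht
    simp only [hpvdef]
    split_ifs with h <;> refine ⟨by omega, ?_, ?_⟩ <;> simp [Nat.dist] <;> omega
  have hph1 : ∀ t, t < s → Nat.dist (ph t) (ph (t+1)) = 1 := by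
    intro t ht
    simp only [hphdef]
    split_ifs with h <;> simp [Nat.dist] <;> omega
  have hpv1 : ∀ t, t < s → Nat.dist (pv t) (pv (t+1)) = 1 := by
    intro t ht
    simp only [hpvdef]
    split_ifs with h <;> simp [Nat.dist] <;> omega
  have hph0 : ph 0 = i₀ := by simp only [hphdef]; split_ifs <;> omega
  have hpv0 : pv 0 = j₀ := by simp only [hpvdef]; split_ifs <;> omega
  -- horizontal ray
  have hfH0 : g (ph 0) j₀ = g i₀ j₀ := by rw [hph0]
  have hfV0 : g i₀ (pv 0) = g i₀ j₀ := by rw [hpv0]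
  have hfHadj : ∀ t, t < s → G.Adj (g (ph t) j₀) (g (ph (t+1)) j₀) := by
    intro t ht
    have hd1 := hgrid (ph t) j₀ (ph (t+1)) j₀ (hph t (by omega)).1 hj₀ (hph (t+1) (by omega)).1 hj₀
    rw [hph1 t ht, Nat.dist_self] at hd1
    exact SimpleGraph.dist_eq_one_iff_adj.mp (by omega)
  have hfVadj : ∀ t, t < s → G.Adj (g i₀ (pv t)) (g i₀ (pv (t+1))) := by
    intro t ht
    have hd1 := hgrid i₀ (pv t) i₀ (pv (t+1)) hi₀ (hpv t (by omega)).1 hi₀ (hpv (t+1) (by omega)).1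
    rw [hpv1 t ht, Nat.dist_self] at hd1
    exact SimpleGraph.dist_eq_one_iff_adj.mp (by omega)
  -- injectivity-style distinctness
  have hdistinct : ∀ i j k l, i ≤ 2*s → j ≤ 2*s → k ≤ 2*s → l ≤ 2*s →
      (Nat.dist i k + Nat.dist j l ≠ 0) → g i j ≠ g k l := by
    intro i j k l hi hj hk hl hnd hEq
    have hd1 := hgrid i j k l hi hj hk hl
    rw [hEq, SimpleGraph.dist_self] at hd1
    omega
  by_cases hH : ∃ t, 1 ≤ t ∧ t ≤ s ∧ g (ph t) j₀ = w
  · obtain ⟨t₀, ht₀1, ht₀2, ht₀⟩ := hH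
    have hVne : ∀ t, t ≤ s → g i₀ (pv t) ≠ w := by
      intro t ht hEq
      rw [← ht₀] at hEq
      refine hdistinct i₀ (pv t) (ph t₀) j₀ hi₀ (hpv t ht).1 (hph t₀ ht₀2).1 hj₀ ?_ hEq
      have := (hph t₀ ht₀2).2.1
      omega
    have hq : g i₀ (pv s) ∈ gBallRemove G w (g i₀ j₀) (s : ℝ) :=
      walk_in_remove hzw (fun t => g i₀ (pv t)) s hfV0 hfVadj hVne (le_refl _)
    have hqb := hball _ (hsub ⟨hq, hX i₀ (pv s) hi₀ (hpv s le_rfl).1⟩)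
    rw [← ht₀] at hqb
    have hd1 := hgrid (ph t₀) j₀ i₀ (pv s) (hph t₀ ht₀2).1 hj₀ hi₀ (hpv s le_rfl).1
    rw [(hph t₀ ht₀2).2.2, (hpv s le_rfl).2.1] at hd1
    omega
  · by_cases hV : ∃ t, 1 ≤ t ∧ t ≤ s ∧ g i₀ (pv t) = w
    · obtain ⟨t₀, ht₀1, ht₀2, ht₀⟩ := hV
      have hHne : ∀ t, t ≤ s → g (ph t) j₀ ≠ w := by
        intro t ht hEq
        rcases Nat.eq_zero_or_pos t with h0 | h0
        · subst h0; rw [hph0] at hEq; exact hzw hEq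
        · exact hH ⟨t, by omega, ht, hEq⟩
      have hp : g (ph s) j₀ ∈ gBallRemove G w (g i₀ j₀) (s : ℝ) :=
        walk_in_remove hzw (fun t => g (ph t) j₀) s hfH0 hfHadj hHne (le_refl _)
      have hpb := hball _ (hsub ⟨hp, hX (ph s) j₀ (hph s le_rfl).1 hj₀⟩)
      rw [← ht₀] at hpb
      have hd1 := hgrid i₀ (pv t₀) (ph s) j₀ hi₀ (hpv t₀ ht₀2).1 (hph s le_rfl).1 hj₀
      rw [(hpv t₀ ht₀2).2.2, (hph s le_rfl).2.1] at hd1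
      omega
    · have hHne : ∀ t, t ≤ s → g (ph t) j₀ ≠ w := by
        intro t ht hEq
        rcases Nat.eq_zero_or_pos t with h0 | h0
        · subst h0; rw [hph0] at hEq; exact hzw hEq
        · exact hH ⟨t, by omega, ht, hEq⟩
      have hVne : ∀ t, t ≤ s → g i₀ (pv t) ≠ w := by
        intro t ht hEq
        rcases Nat.eq_zero_or_pos t with h0 | h0
        · subst h0; rw [hpv0] at hEq; exact hzw hEq
        · exact hV ⟨t, by omega, ht, hEq⟩
      have hp : g (ph s) j₀ ∈ gBallRemove G w (g i₀ j₀) (s : ℝ) :=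
        walk_in_remove hzw (fun t => g (ph t) j₀) s hfH0 hfHadj hHne (le_refl _)
      have hq : g i₀ (pv s) ∈ gBallRemove G w (g i₀ j₀) (s : ℝ) :=
        walk_in_remove hzw (fun t => g i₀ (pv t)) s hfV0 hfVadj hVne (le_refl _)
      have hpb := hball _ (hsub ⟨hp, hX (ph s) j₀ (hph s le_rfl).1 hj₀⟩)
      have hqb := hball _ (hsub ⟨hq, hX i₀ (pv s) hi₀ (hpv s le_rfl).1⟩)
      have hd1 := hgrid (ph s) j₀ i₀ (pv s) (hph s le_rfl).1 hj₀ hi₀ (hpv s le_rfl).1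
      rw [(hph s le_rfl).2.2, (hpv s le_rfl).2.1] at hd1
      have t1 : G.dist (g (ph s) j₀) (g i₀ (pv s)) ≤
          G.dist (g (ph s) j₀) w + G.dist w (g i₀ (pv s)) := hG.dist_triangle
      have c1 : G.dist (g (ph s) j₀) w = G.dist w (g (ph s) j₀) := SimpleGraph.dist_comm ..
      omega

end Stmt14Aux

theorem statement14 (V : Type*) (G : SimpleGraph V) (hG : G.Connected)
    (hmed : MedianGraph G)
    (s : ℕ) (hs : 1 ≤ s)
    (hd : Dismantlable G (s : ℝ) ((s : ℝ) - 1)) :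
    IsHyperbolic G (2 * (s : ℝ)) := by
  intro u v x y
  obtain ⟨c, e, p1, p2, p3, p4⟩ := Stmt14Aux.defect_le hG hmed u v x y
  have hce := Stmt14Aux.thin hG hmed hs hd p1 p2 p3
  have keyN : G.dist u v + G.dist x y ≤
      max (G.dist u x + G.dist v y) (G.dist u y + G.dist v x) + 4 * s :=
    le_trans p4 (Nat.add_le_add_left hce _)
  have keyR : ((G.dist u v : ℝ) + (G.dist x y : ℝ)) ≤
      ((max (G.dist u x + G.dist v y) (G.dist u y + G.dist v x) + 4 * s : ℕ) : ℝ) := by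
    exact_mod_cast keyN
  push_cast [Nat.cast_max] at keyR
  linarith
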